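/- (Multiplicity lemma, C^m version.) Let n ≥ 2, let m ≥ n, and let a₂,…,aₙ : ℝ → ℝ be functions of class C^m such that for every t ∈ ℝ the monic polynomial P(t)(x) = xⁿ + a₂(t)xⁿ⁻² - a₃(t)xⁿ⁻³ + ⋯ + (-1)ⁿaₙ(t) (i.e. with a₁ ≡ 0) has all roots real. Then the following are equivalent: (1) for every k with 2 ≤ k ≤ n there is a function a_{k,k} of class C^{m-k} with a_k(t) = t^k·a_{k,k}(t) for all t; (2) there is a function a_{2,2} of class C^{m-2} with a₂(t) = t²·a_{2,2}(t) for all t. -/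

import Mathlib

open Polynomial

section Aux
open intervalIntegral MeasureTheory Metric Set

lemma uIoc01 : Set.uIoc (0:ℝ) 1 = Set.Ioc 0 1 := by rw [Set.uIoc_of_le]; norm_num

lemma paramInt_contDiff : ∀ (j : ℕ) (p : ℕ) (u : ℝ → ℝ), ContDiff ℝ (j : ℕ) u →
    ContDiff ℝ (j : ℕ) (fun t : ℝ => ∫ s in (0:ℝ)..1, s ^ p * u (s * t)) := by
  intro j
  induction j with
  | zero =>
    intro p u hu
    rw [Nat.cast_zero, contDiff_zero] at *
    rw [continuous_iff_continuousAt]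
    intro t₀
    obtain ⟨C, hC⟩ := (isCompact_Icc (a := -(|t₀|+1)) (b := |t₀|+1)).exists_bound_of_continuousOn
      hu.continuousOn
    apply continuousAt_of_dominated_interval (bound := fun _ => C)
    · filter_upwards with x
      exact (Continuous.mul (by fun_prop) (hu.comp (by fun_prop))).aestronglyMeasurable
    · filter_upwards [Metric.ball_mem_nhds t₀ one_pos] with x hx
      filter_upwards with s hs
      rw [uIoc01] at hs
      have h1 : |s| ≤ 1 := by rw [abs_le]; constructor <;> [linarith [hs.1]; linarith [hs.2]]
      have h2 : s * x ∈ Icc (-(|t₀|+1)) (|t₀|+1) := by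
        have : |s * x| ≤ |t₀| + 1 := by
          rw [abs_mul]
          calc |s| * |x| ≤ 1 * |x| := by
                apply mul_le_mul_of_nonneg_right h1 (abs_nonneg _)
            _ = |x| := one_mul _
            _ ≤ |t₀| + 1 := by
                have h3 : |x - t₀| < 1 := mem_ball_iff_norm.mp hx
                have h4 := abs_sub_abs_le_abs_sub x t₀
                linarith
        rw [mem_Icc, ← abs_le]
        exact this
      calc ‖s ^ p * u (s * x)‖ = |s| ^ p * ‖u (s * x)‖ := by
            rw [norm_mul, norm_pow]; rfl
        _ ≤ 1 * C := by
            apply mul_le_mul (pow_le_one₀ (abs_nonneg _) h1) (hC _ h2) (norm_nonneg _) one_pos.le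
        _ = C := one_mul _
    · exact intervalIntegrable_const
    · filter_upwards with s _
      exact (continuous_const.mul (hu.comp (by fun_prop))).continuousAt
  | succ j ih =>
    intro p u hu
    have hu1 : ContDiff ℝ ((j : WithTop ℕ∞) + 1) u := by exact_mod_cast hu
    have hu' : ContDiff ℝ (j : ℕ) (deriv u) := (contDiff_succ_iff_deriv.mp hu1).2.2
    have hud : Differentiable ℝ u := (contDiff_succ_iff_deriv.mp hu1).1
    have key : ∀ t₀ : ℝ, HasDerivAt (fun t : ℝ => ∫ s in (0:ℝ)..1, s ^ p * u (s * t))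
        (∫ s in (0:ℝ)..1, s ^ (p+1) * deriv u (s * t₀)) t₀ := by
      intro t₀
      obtain ⟨C, hC⟩ := (isCompact_Icc (a := -(|t₀|+1)) (b := |t₀|+1)).exists_bound_of_continuousOn
        (hu'.continuous).continuousOn
      have habs : ∀ (s x : ℝ), s ∈ Ioc (0:ℝ) 1 → x ∈ ball t₀ 1 →
          s * x ∈ Icc (-(|t₀|+1)) (|t₀|+1) := by
        intro s x hs hx
        have h1 : |s| ≤ 1 := by rw [abs_le]; constructor <;> [linarith [hs.1]; linarith [hs.2]]
        rw [mem_Icc, ← abs_le, abs_mul]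
        have h3 : |x - t₀| < 1 := mem_ball_iff_norm.mp hx
        have h4 := abs_sub_abs_le_abs_sub x t₀
        calc |s| * |x| ≤ 1 * |x| := mul_le_mul_of_nonneg_right h1 (abs_nonneg _)
          _ = |x| := one_mul _
          _ ≤ |t₀| + 1 := by linarith
      refine (intervalIntegral.hasDerivAt_integral_of_dominated_loc_of_deriv_le (s := ball t₀ 1)
        (F := fun x s => s ^ p * u (s * x)) (F' := fun x s => s ^ (p+1) * deriv u (s * x))
        (bound := fun _ => C) (ball_mem_nhds t₀ one_pos) ?_ ?_ ?_ ?_ ?_ ?_).2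
      · filter_upwards with x
        exact (Continuous.mul (by fun_prop) (hu1.continuous.comp (by fun_prop))).aestronglyMeasurable
      · exact (Continuous.mul (by fun_prop)
          (hu1.continuous.comp (by fun_prop))).intervalIntegrable _ _
      · exact (Continuous.mul (by fun_prop)
          (hu'.continuous.comp (by fun_prop))).aestronglyMeasurable
      · filter_upwards with s hs
        rw [uIoc01] at hs
        intro x hx
        have h1 : |s| ≤ 1 := by rw [abs_le]; constructor <;> [linarith [hs.1]; linarith [hs.2]]
        calc ‖s ^ (p+1) * deriv u (s * x)‖ = |s| ^ (p+1) * ‖deriv u (s * x)‖ := by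
              rw [norm_mul, norm_pow]; rfl
          _ ≤ 1 * C := mul_le_mul (pow_le_one₀ (abs_nonneg _) h1) (hC _ (habs s x hs hx))
              (norm_nonneg _) one_pos.le
          _ = C := one_mul _
      · exact intervalIntegrable_const
      · filter_upwards with s hs
        intro x _
        have h : HasDerivAt (fun x : ℝ => u (s * x)) (deriv u (s * x) * s) x := by
          have h2 : HasDerivAt (fun x : ℝ => s * x) s x := by
            simpa using (hasDerivAt_id x).const_mul s
          exact (hud.differentiableAt.hasDerivAt).comp x h2
        have := h.const_mul (s ^ p)
        convert this using 1
        · rfl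
        ring
    have : ContDiff ℝ ((j : WithTop ℕ∞) + 1) (fun t : ℝ => ∫ s in (0:ℝ)..1, s ^ p * u (s * t)) := by
      rw [contDiff_succ_iff_deriv]
      refine ⟨fun t => (key t).differentiableAt, by simp, ?_⟩
      have hd : deriv (fun t : ℝ => ∫ s in (0:ℝ)..1, s ^ p * u (s * t))
          = fun t : ℝ => ∫ s in (0:ℝ)..1, s ^ (p+1) * deriv u (s * t) :=
        funext fun t => (key t).deriv
      rw [hd]
      exact ih (p+1) (deriv u) hu'
    exact_mod_cast this

lemma hadamard_div (r : ℕ) (f : ℝ → ℝ) (hf : ContDiff ℝ ((r+1 : ℕ)) f) (h0 : f 0 = 0) :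
    ∃ g : ℝ → ℝ, ContDiff ℝ (r : ℕ) g ∧ ∀ t, f t = t * g t := by
  have hf1 : ContDiff ℝ ((r : WithTop ℕ∞) + 1) f := by exact_mod_cast hf
  have hf' : ContDiff ℝ (r : ℕ) (deriv f) := (contDiff_succ_iff_deriv.mp hf1).2.2
  have hfd : Differentiable ℝ f := (contDiff_succ_iff_deriv.mp hf1).1
  refine ⟨fun t => ∫ s in (0:ℝ)..1, deriv f (s * t), ?_, ?_⟩
  · have := paramInt_contDiff r 0 (deriv f) hf'
    simpa using this
  · intro t
    have hident : ∫ s in (0:ℝ)..1, deriv f (s * t) * t = f t := by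
      have h1 : ∀ s ∈ Set.uIcc (0:ℝ) 1, HasDerivAt (fun s : ℝ => f (s * t))
          (deriv f (s * t) * t) s := by
        intro s _
        have h2 : HasDerivAt (fun s : ℝ => s * t) t s := by
          simpa using (hasDerivAt_id s).mul_const t
        exact (hfd.differentiableAt.hasDerivAt).comp s h2
      have h2 : IntervalIntegrable (fun s : ℝ => deriv f (s * t) * t) MeasureTheory.volume 0 1 :=
        (Continuous.mul (hf'.continuous.comp (by fun_prop)) continuous_const).intervalIntegrable _ _
      have := intervalIntegral.integral_eq_sub_of_hasDerivAt h1 h2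
      simpa [h0] using this
    simp only
    rw [← hident, intervalIntegral.integral_mul_const]
    ring

lemma pow_div_lemma : ∀ (k : ℕ) (r : ℕ) (f c : ℝ → ℝ), k ≤ r → ContDiff ℝ (r : ℕ) f →
    Continuous c → (∀ t, |f t| ≤ c t * |t| ^ k) →
    ∃ g : ℝ → ℝ, ContDiff ℝ ((r - k : ℕ)) g ∧ (∀ t, f t = t ^ k * g t) ∧ ∀ t, |g t| ≤ c t := by
  intro k
  induction k with
  | zero =>
    intro r f c _ hf _ hb
    exact ⟨f, by simpa using hf, fun t => by simp, fun t => by simpa using hb t⟩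
  | succ k ih =>
    intro r f c hkr hf hc hb
    obtain ⟨r', rfl⟩ : ∃ r', r = r' + 1 := ⟨r - 1, by omega⟩
    have h0 : f 0 = 0 := by
      have := hb 0
      simp at this
      exact this
    obtain ⟨h, hh, hfh⟩ := hadamard_div r' f hf h0
    have hhb : ∀ t, |h t| ≤ c t * |t| ^ k := by
      have hcl : IsClosed {t : ℝ | |h t| ≤ c t * |t| ^ k} :=
        isClosed_le hh.continuous.abs (hc.mul (continuous_abs.pow k))
      have hsub : {(0:ℝ)}ᶜ ⊆ {t : ℝ | |h t| ≤ c t * |t| ^ k} := by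
        intro t ht
        have ht' : t ≠ 0 := ht
        have h3 : |t| * |h t| ≤ |t| * (c t * |t| ^ k) := by
          calc |t| * |h t| = |t * h t| := (abs_mul t (h t)).symm
            _ ≤ c t * |t| ^ (k+1) := by rw [← hfh t]; exact hb t
            _ = |t| * (c t * |t| ^ k) := by ring
        exact le_of_mul_le_mul_left h3 (abs_pos.mpr ht')
      have : closure ({(0:ℝ)}ᶜ) ⊆ {t : ℝ | |h t| ≤ c t * |t| ^ k} := hcl.closure_subset_iff.mpr hsub
      rw [(dense_compl_singleton (0:ℝ)).closure_eq] at this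
      exact fun t => this (Set.mem_univ t)
    obtain ⟨g, hg, hhg, hgb⟩ := ih r' h c (by omega) hh hc hhb
    refine ⟨g, by convert hg using 2; omega, fun t => ?_, hgb⟩
    rw [hfh t, hhg t]; ring
end Aux
lemma mset_esymm_one (s : Multiset ℝ) : s.esymm 1 = s.sum := by
  rw [Multiset.esymm, Multiset.powersetCard_one, Multiset.map_map]
  simp [Function.comp]

lemma mset_esymm_two_cons (x : ℝ) (s : Multiset ℝ) :
    (x ::ₘ s).esymm 2 = x * s.sum + s.esymm 2 := by
  rw [Multiset.esymm, Multiset.powersetCard_cons, Multiset.map_add, Multiset.sum_add,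
    Multiset.map_map]
  rw [add_comm]
  congr 1
  · rw [Multiset.powersetCard_one, Multiset.map_map]
    have hc : (Multiset.prod ∘ Multiset.cons x) ∘ (singleton : ℝ → Multiset ℝ)
        = fun y => x * id y := by
      funext y; simp
    rw [hc, Multiset.sum_map_mul_left]
    simp

lemma mset_sq_sum (s : Multiset ℝ) :
    s.sum ^ 2 = (s.map (fun x => x ^ 2)).sum + 2 * s.esymm 2 := by
  induction s using Multiset.induction_on with
  | empty => simp [Multiset.esymm, Multiset.powersetCard_eq_empty 2 (s := (0 : Multiset ℝ)) (by simp)]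
  | cons x s ih =>
    rw [Multiset.sum_cons, mset_esymm_two_cons, Multiset.map_cons, Multiset.sum_cons]
    ring_nf
    ring_nf at ih
    nlinarith [ih]

lemma mset_abs_prod_le (M : ℝ) (hM : 0 ≤ M) :
    ∀ (s : Multiset ℝ), (∀ x ∈ s, |x| ≤ M) → |s.prod| ≤ M ^ Multiset.card s := by
  intro s
  induction s using Multiset.induction_on with
  | empty => simp
  | cons x s ih =>
    intro h
    rw [Multiset.prod_cons, Multiset.card_cons, abs_mul, pow_succ']
    exact mul_le_mul (h x (Multiset.mem_cons_self _ _))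
      (ih fun y hy => h y (Multiset.mem_cons_of_mem hy)) (abs_nonneg _)
      hM

lemma mset_esymm_bound (s : Multiset ℝ) (k : ℕ) (M : ℝ) (hM : 0 ≤ M)
    (h : ∀ x ∈ s, |x| ≤ M) :
    |s.esymm k| ≤ ((Multiset.card s).choose k : ℝ) * M ^ k := by
  rw [Multiset.esymm]
  refine le_trans (Multiset.abs_sum_le_sum_abs) ?_
  have hb : ∀ y ∈ ((s.powersetCard k).map Multiset.prod).map abs, y ≤ M ^ k := by
    intro y hy
    rw [Multiset.mem_map] at hy
    obtain ⟨z, hz, rfl⟩ := hy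
    rw [Multiset.mem_map] at hz
    obtain ⟨u, hu, rfl⟩ := hz
    rw [Multiset.mem_powersetCard] at hu
    have := mset_abs_prod_le M hM u (fun x hx => h x (Multiset.mem_of_le hu.1 hx))
    rwa [hu.2] at this
  have := Multiset.sum_le_card_nsmul _ _ hb
  rwa [Multiset.card_map, Multiset.card_map, Multiset.card_powersetCard, nsmul_eq_mul] at this

/-- The monic polynomial curve `P(t)(x) = xⁿ - a₁(t)xⁿ⁻¹ + a₂(t)xⁿ⁻² - ⋯ + (-1)ⁿ aₙ(t)`. -/
noncomputable def curvePoly (n : ℕ) (a : ℕ → ℝ → ℝ) (t : ℝ) : Polynomial ℝ :=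
  X ^ n + ∑ k ∈ Finset.Icc 1 n, C ((-1 : ℝ) ^ k * a k t) * X ^ (n - k)

/-- `x : T → ℝⁿ` parametrizes the roots of `P` on `T`: for each `t ∈ T` the multiset
`{x₁(t),…,xₙ(t)}` equals the multiset of roots of `P(t)` with multiplicity. -/
def IsRootParamOn (n : ℕ) (a : ℕ → ℝ → ℝ) (T : Set ℝ) (x : Fin n → ℝ → ℝ) : Prop :=
  ∀ t ∈ T, (curvePoly n a t).roots = Multiset.map (fun i => x i t) (Finset.univ : Finset (Fin n)).val

lemma curvePoly_deg_lt (n : ℕ) (hn : 1 ≤ n) (a : ℕ → ℝ → ℝ) (t : ℝ) :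
    (∑ k ∈ Finset.Icc 1 n, C ((-1 : ℝ) ^ k * a k t) * X ^ (n - k)).degree < (n : WithBot ℕ) := by
  apply lt_of_le_of_lt (Polynomial.degree_sum_le _ _)
  rw [Finset.sup_lt_iff (by exact_mod_cast WithBot.bot_lt_coe n)]
  intro k hk
  rw [Finset.mem_Icc] at hk
  refine lt_of_le_of_lt (degree_C_mul_X_pow_le _ _) ?_
  exact_mod_cast Nat.sub_lt_of_pos_le (by omega) hk.2

lemma curvePoly_monic (n : ℕ) (hn : 1 ≤ n) (a : ℕ → ℝ → ℝ) (t : ℝ) :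
    (curvePoly n a t).Monic :=
  monic_X_pow_add (curvePoly_deg_lt n hn a t)

lemma curvePoly_natDegree (n : ℕ) (hn : 1 ≤ n) (a : ℕ → ℝ → ℝ) (t : ℝ) :
    (curvePoly n a t).natDegree = n := by
  have h := curvePoly_deg_lt n hn a t
  have : (curvePoly n a t).degree = n := by
    rw [curvePoly, degree_add_eq_left_of_degree_lt (by rwa [degree_X_pow]), degree_X_pow]
  exact natDegree_eq_of_degree_eq_some this

lemma curvePoly_coeff (n : ℕ) (a : ℕ → ℝ → ℝ) (t : ℝ) (k : ℕ) (hk1 : 1 ≤ k) (hk : k ≤ n) :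
    (curvePoly n a t).coeff (n - k) = (-1 : ℝ) ^ k * a k t := by
  rw [curvePoly, coeff_add, coeff_X_pow, finset_sum_coeff]
  rw [Finset.sum_eq_single k]
  · rw [coeff_C_mul_X_pow, if_pos rfl, if_neg (by omega)]
    ring
  · intro j hj hjk
    rw [Finset.mem_Icc] at hj
    rw [coeff_C_mul_X_pow, if_neg (by omega)]
  · intro hk'
    exact absurd (Finset.mem_Icc.mpr ⟨hk1, hk⟩) hk'

lemma curvePoly_esymm (n : ℕ) (hn : 1 ≤ n) (a : ℕ → ℝ → ℝ) (t : ℝ)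
    (hreal : ((curvePoly n a t).roots).card = n) (k : ℕ) (hk1 : 1 ≤ k) (hk : k ≤ n) :
    (curvePoly n a t).roots.esymm k = a k t := by
  have hnd := curvePoly_natDegree n hn a t
  have hcard : Multiset.card (curvePoly n a t).roots = (curvePoly n a t).natDegree := by
    rw [hnd, hreal]
  have h := Polynomial.coeff_eq_esymm_roots_of_card hcard
    (k := n - k) (by rw [hnd]; omega)
  rw [hnd, (curvePoly_monic n hn a t).leadingCoeff, curvePoly_coeff n a t k hk1 hk,
    Nat.sub_sub_self hk, one_mul] at h
  have h2 : ((-1:ℝ)^k) * ((-1:ℝ)^k) = 1 := by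
    rw [← mul_pow]; norm_num
  calc (curvePoly n a t).roots.esymm k
      = (((-1:ℝ)^k) * ((-1:ℝ)^k)) * (curvePoly n a t).roots.esymm k := by rw [h2, one_mul]
    _ = ((-1:ℝ)^k) * ((-1:ℝ)^k * (curvePoly n a t).roots.esymm k) := by ring
    _ = ((-1:ℝ)^k) * ((-1:ℝ)^k * a k t) := by rw [← h]
    _ = a k t := by rw [← mul_assoc, h2, one_mul]

theorem multiplicity_lemma_Cm
    (n m : ℕ) (hn : 2 ≤ n) (hm : n ≤ m) (a : ℕ → ℝ → ℝ)
    (ha1 : ∀ t : ℝ, a 1 t = 0)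
    (hsmooth : ∀ k ∈ Finset.Icc 2 n, ContDiff ℝ (m : ℕ) (a k))
    (hreal : ∀ t : ℝ, ((curvePoly n a t).roots).card = n) :
    (∀ k ∈ Finset.Icc 2 n, ∃ akk : ℝ → ℝ, ContDiff ℝ ((m - k : ℕ)) akk ∧
        ∀ t : ℝ, a k t = t ^ k * akk t) ↔
    (∃ a22 : ℝ → ℝ, ContDiff ℝ ((m - 2 : ℕ)) a22 ∧ ∀ t : ℝ, a 2 t = t ^ 2 * a22 t) := by
  constructor
  · intro h
    exact h 2 (Finset.mem_Icc.mpr ⟨le_refl 2, hn⟩)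
  · rintro ⟨a22, ha22, ha2⟩
    intro k hk
    rw [Finset.mem_Icc] at hk
    have hn1 : 1 ≤ n := by omega
    set b : ℝ → ℝ := fun t => -2 * a22 t with hb
    have hbc : Continuous b := continuous_const.mul ha22.continuous
    -- the multiset of roots: sum of squares
    have hsq : ∀ t : ℝ, ((curvePoly n a t).roots.map (fun x => x ^ 2)).sum = t ^ 2 * b t := by
      intro t
      have h1 : (curvePoly n a t).roots.esymm 1 = a 1 t :=
        curvePoly_esymm n hn1 a t (hreal t) 1 le_rfl hn1
      have h2 : (curvePoly n a t).roots.esymm 2 = a 2 t :=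
        curvePoly_esymm n hn1 a t (hreal t) 2 one_le_two hn
      have hsum : (curvePoly n a t).roots.sum = 0 := by
        rw [← mset_esymm_one, h1, ha1]
      have := mset_sq_sum (curvePoly n a t).roots
      rw [hsum, h2, ha2 t] at this
      show _ = t ^ 2 * (-2 * a22 t)
      nlinarith [this]
    -- bound on roots
    have hroot_bd : ∀ t : ℝ, ∀ x ∈ (curvePoly n a t).roots,
        |x| ≤ |t| * Real.sqrt |b t| := by
      intro t x hx
      have hmem : x ^ 2 ∈ (curvePoly n a t).roots.map (fun x => x ^ 2) :=
        Multiset.mem_map_of_mem _ hx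
      have hle : x ^ 2 ≤ t ^ 2 * b t := by
        rw [← hsq t]
        exact Multiset.single_le_sum (fun y hy => by
          rw [Multiset.mem_map] at hy
          obtain ⟨z, _, rfl⟩ := hy
          positivity) _ hmem
      have hM : (0:ℝ) ≤ |t| * Real.sqrt |b t| := by positivity
      have hMsq : (|t| * Real.sqrt |b t|) ^ 2 = t ^ 2 * |b t| := by
        rw [mul_pow, sq_abs, Real.sq_sqrt (abs_nonneg _)]
      calc |x| = Real.sqrt (x ^ 2) := (Real.sqrt_sq_eq_abs x).symm
        _ ≤ Real.sqrt ((|t| * Real.sqrt |b t|) ^ 2) := by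
            apply Real.sqrt_le_sqrt
            rw [hMsq]
            calc x ^ 2 ≤ t ^ 2 * b t := hle
              _ ≤ t ^ 2 * |b t| := by
                  apply mul_le_mul_of_nonneg_left (le_abs_self _) (by positivity)
        _ = |t| * Real.sqrt |b t| := Real.sqrt_sq hM
    -- bound on a k
    set c : ℝ → ℝ := fun t => (n.choose k : ℝ) * (Real.sqrt |b t|) ^ k with hcdef
    have hcc : Continuous c :=
      continuous_const.mul (((Real.continuous_sqrt.comp hbc.abs)).pow k)
    have hbd : ∀ t : ℝ, |a k t| ≤ c t * |t| ^ k := by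
      intro t
      have := mset_esymm_bound (curvePoly n a t).roots k (|t| * Real.sqrt |b t|)
        (by positivity) (hroot_bd t)
      rw [hreal t, curvePoly_esymm n hn1 a t (hreal t) k (by omega) hk.2] at this
      calc |a k t| ≤ (n.choose k : ℝ) * (|t| * Real.sqrt |b t|) ^ k := this
        _ = c t * |t| ^ k := by rw [hcdef]; ring
    obtain ⟨g, hg, hfg, _⟩ := pow_div_lemma k m (a k) c (by omega) (hsmooth k
      (Finset.mem_Icc.mpr hk)) hcc hbd
    exact ⟨g, hg, hfg⟩
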